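/- Let K ⊆ ℝ^d be a topologically regular compact set and assume that for every x ∈ ∂K there exist C_x > 0 and a neighbourhood V_x of x such that each y ∈ V_x ∩ K can be joined from x by a rectifiable path of length at most C_x|x−y| contained in int(K) ∪ {x, y}. Then C¹_int(K) = C¹(K); that is, for every f ∈ C¹_int(K), the continuous extension to K of the derivative of f on int(K) is a continuous derivative of f on all of K. -/

import Mathlib

open Set Filter Topology MeasureTheory
open scoped NNReal ENNReal

noncomputable section

/-- `df` is a (not necessarily unique) derivative of `f` on the set `K`:
at every `x ∈ K`, `(f y - f x - ⟪df x, y - x⟫)/‖y - x‖ → 0` as `y → x` within `K`. -/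
def IsDerivOn {d : ℕ} (K : Set (EuclideanSpace ℝ (Fin d)))
    (f : EuclideanSpace ℝ (Fin d) → ℝ)
    (df : EuclideanSpace ℝ (Fin d) → EuclideanSpace ℝ (Fin d)) : Prop :=
  ∀ x ∈ K, Filter.Tendsto
    (fun y => (f y - f x - (inner ℝ (df x) (y - x) : ℝ)) / ‖y - x‖)
    (𝓝[K \ {x}] x) (𝓝 0)


/-- A "continuous induction" estimate: if `h` is continuous on `[c, d]`, `v` is monotone
on `[c, d]`, and from every point `t ∈ [c, d)` we can move strictly to the right while
keeping the increment of `h` controlled by `C` times the increment of `v` plus `δ` times the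
time increment, then the same bound holds globally on `[c, d]`. -/
private lemma core_est {h v : ℝ → ℝ} {c d C δ : ℝ} (hcd : c ≤ d)
    (hh : ContinuousOn h (Icc c d)) (hv : MonotoneOn v (Icc c d))
    (hC : 0 ≤ C) (hδ : 0 ≤ δ)
    (hloc : ∀ t ∈ Ico c d, ∃ s, t < s ∧ s ≤ d ∧
      |h s - h t| ≤ C * (v s - v t) + δ * (s - t)) :
    |h d - h c| ≤ C * (v d - v c) + δ * (d - c) := by
  set S : Set ℝ := {t : ℝ | t ∈ Icc c d ∧ |h t - h c| ≤ C * (v t - v c) + δ * (t - c)} with hSdef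
  have hcS : c ∈ S := by
    refine ⟨⟨le_refl c, hcd⟩, ?_⟩
    simp
  have hne : S.Nonempty := ⟨c, hcS⟩
  have hbdd : BddAbove S := ⟨d, fun t ht => ht.1.2⟩
  set T := sSup S with hT
  have hTc : c ≤ T := le_csSup hbdd hcS
  have hTd : T ≤ d := csSup_le hne fun t ht => ht.1.2
  have hTIcc : T ∈ Icc c d := ⟨hTc, hTd⟩
  have hTS : T ∈ S := by
    refine ⟨hTIcc, ?_⟩
    have hcl : T ∈ closure S := csSup_mem_closure hne hbdd
    have hnb : (𝓝[S] T).NeBot := mem_closure_iff_nhdsWithin_neBot.mp hcl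
    have htend : Tendsto (fun t => |h t - h c|) (𝓝[S] T) (𝓝 |h T - h c|) := by
      have h1 := ((hh T hTIcc).mono (fun t (ht : t ∈ S) => ht.1)).tendsto
      exact (h1.sub tendsto_const_nhds).abs
    refine le_of_tendsto htend ?_
    filter_upwards [self_mem_nhdsWithin] with t ht
    have h1 := ht.2
    have h2 : v t ≤ v T := hv ht.1 hTIcc (le_csSup hbdd ht)
    have h3 : t ≤ T := le_csSup hbdd ht
    nlinarith [mul_nonneg hC (sub_nonneg.mpr h2), mul_nonneg hδ (sub_nonneg.mpr h3)]
  rcases eq_or_lt_of_le hTd with heq | hlt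
  · rw [← heq]; exact hTS.2
  · obtain ⟨s, hTs, hsd, hb⟩ := hloc T ⟨hTc, hlt⟩
    have hsS : s ∈ S := by
      refine ⟨⟨le_trans hTc hTs.le, hsd⟩, ?_⟩
      calc |h s - h c| ≤ |h s - h T| + |h T - h c| := abs_sub_le _ _ _
        _ ≤ (C * (v s - v T) + δ * (s - T)) + (C * (v T - v c) + δ * (T - c)) :=
            add_le_add hb hTS.2
        _ = C * (v s - v c) + δ * (s - c) := by ring
    exact absurd (le_csSup hbdd hsS) (not_le.mpr hTs)

/-- Along a continuous path of variation at most `L` whose interior-time points lie in an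
open-ish region where `g` has derivative of norm at most `ε`, the endpoint increment of `g`
is at most `ε * L`. -/
private lemma path_est {n : ℕ} {U : Set (EuclideanSpace ℝ (Fin n))}
    {g : EuclideanSpace ℝ (Fin n) → ℝ} {ε : ℝ} (hε : 0 ≤ ε)
    (hU : ∀ z ∈ U, ∃ φ : EuclideanSpace ℝ (Fin n) →L[ℝ] ℝ, HasFDerivAt g φ z ∧ ‖φ‖ ≤ ε)
    {γ : ℝ → EuclideanSpace ℝ (Fin n)} {a b : ℝ} (hab : a ≤ b)
    (hγ : ContinuousOn γ (Icc a b))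
    (hint : ∀ t ∈ Ioo a b, γ t ∈ U)
    (hh : ContinuousOn (fun t => g (γ t)) (Icc a b))
    {L : ℝ} (hL0 : 0 ≤ L)
    (hL : eVariationOn γ (Icc a b) ≤ ENNReal.ofReal L) :
    |g (γ b) - g (γ a)| ≤ ε * L := by
  rcases eq_or_lt_of_le hab with rfl | hlt
  · simpa using mul_nonneg hε hL0
  set H : ℝ → ℝ := fun t => g (γ t) with hHdef
  have hBV : BoundedVariationOn γ (Icc a b) := (lt_of_le_of_lt hL ENNReal.ofReal_lt_top).ne
  have hLBV : LocallyBoundedVariationOn γ (Icc a b) := hBV.locallyBoundedVariationOn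
  set v : ℝ → ℝ := variationOnFromTo γ (Icc a b) a with hvdef
  have haIcc : a ∈ Icc a b := left_mem_Icc.mpr hab
  have hmono : MonotoneOn v (Icc a b) := variationOnFromTo.monotoneOn hLBV haIcc
  have hsub : ∀ t ∈ Icc a b, ∀ s ∈ Icc a b, t ≤ s →
      dist (γ s) (γ t) ≤ v s - v t ∧ v s - v t ≤ L := by
    intro t ht s hs hts
    have hadd := variationOnFromTo.add hLBV haIcc ht hs
    have h1 : variationOnFromTo γ (Icc a b) t s = (eVariationOn γ (Icc a b ∩ Icc t s)).toReal :=
      variationOnFromTo.eq_of_le _ _ hts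
    have h3 : eVariationOn γ (Icc a b ∩ Icc t s) ≤ ENNReal.ofReal L :=
      le_trans (eVariationOn.mono γ inter_subset_left) hL
    have h2 : edist (γ t) (γ s) ≤ eVariationOn γ (Icc a b ∩ Icc t s) :=
      eVariationOn.edist_le γ ⟨ht, le_refl t, hts⟩ ⟨hs, hts, le_refl s⟩
    have h4 : dist (γ t) (γ s) ≤ (eVariationOn γ (Icc a b ∩ Icc t s)).toReal := by
      rw [dist_edist]
      exact ENNReal.toReal_mono (lt_of_le_of_lt h3 ENNReal.ofReal_lt_top).ne h2
    have h5 : (eVariationOn γ (Icc a b ∩ Icc t s)).toReal ≤ L :=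
      ENNReal.toReal_le_of_le_ofReal hL0 h3
    have h6 : v s - v t = (eVariationOn γ (Icc a b ∩ Icc t s)).toReal := by
      rw [← h1]; linarith [hadd]
    constructor
    · rw [dist_comm, h6]; exact h4
    · rw [h6]; exact h5
  refine le_of_forall_pos_le_add fun η hη => ?_
  -- pick points a' and b' slightly inside (a, b)
  have hnbA : (𝓝[Ioo a b] a).NeBot := by
    apply mem_closure_iff_nhdsWithin_neBot.mp
    rw [closure_Ioo hlt.ne]
    exact ⟨le_refl a, hab⟩
  have hcontA : Tendsto H (𝓝[Ioo a b] a) (𝓝 (H a)) :=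
    ((hh a ⟨le_refl a, hab⟩).mono Ioo_subset_Icc_self).tendsto
  have hevA : ∀ᶠ t in 𝓝[Ioo a b] a, H t ∈ Metric.ball (H a) (η/4) :=
    hcontA (Metric.ball_mem_nhds _ (by positivity : (0:ℝ) < η/4))
  obtain ⟨a', ha'd, ha'⟩ := (hevA.and self_mem_nhdsWithin).exists
  have hnbB : (𝓝[Ioo a' b] b).NeBot := by
    apply mem_closure_iff_nhdsWithin_neBot.mp
    rw [closure_Ioo ha'.2.ne]
    exact ⟨ha'.2.le, le_refl b⟩
  have hcontB : Tendsto H (𝓝[Ioo a' b] b) (𝓝 (H b)) := by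
    refine ((hh b ⟨hab, le_refl b⟩).mono ?_).tendsto
    exact fun t ht => ⟨le_trans ha'.1.le ht.1.le, ht.2.le⟩
  have hevB : ∀ᶠ t in 𝓝[Ioo a' b] b, H t ∈ Metric.ball (H b) (η/4) :=
    hcontB (Metric.ball_mem_nhds _ (by positivity : (0:ℝ) < η/4))
  obtain ⟨b', hb'd, hb'⟩ := (hevB.and self_mem_nhdsWithin).exists
  have ha'Icc : a' ∈ Icc a b := Ioo_subset_Icc_self ha'
  have hb'Icc : b' ∈ Icc a b := ⟨le_trans ha'Icc.1 hb'.1.le, hb'.2.le⟩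
  set δ' : ℝ := η / (4 * (L + 1)) with hδ'def
  have hδ'pos : 0 < δ' := by positivity
  set δc : ℝ := η / (4 * (b - a)) with hδcdef
  have hδcpos : 0 < δc := div_pos hη (by linarith)
  have hIccsub : Icc a' b' ⊆ Icc a b := Icc_subset_Icc ha'Icc.1 hb'Icc.2
  have hcore : |H b' - H a'| ≤ (ε + δ') * (v b' - v a') + δc * (b' - a') := by
    refine core_est hb'.1.le (hh.mono hIccsub) (hmono.mono hIccsub)
      (by positivity) hδcpos.le ?_
    intro t ht
    have htIoo : t ∈ Ioo a b := ⟨lt_of_lt_of_le ha'.1 ht.1, lt_trans ht.2 hb'.2⟩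
    have htIcc : t ∈ Icc a b := Ioo_subset_Icc_self htIoo
    obtain ⟨φ, hφ, hφn⟩ := hU (γ t) (hint t htIoo)
    have hlittle : ∀ᶠ z in 𝓝 (γ t), ‖g z - g (γ t) - φ (z - γ t)‖ ≤ δ' * ‖z - γ t‖ :=
      hφ.isLittleO.def hδ'pos
    have htendγ : Tendsto γ (𝓝[Icc a b] t) (𝓝 (γ t)) := (hγ t htIcc).tendsto
    have hev : ∀ᶠ s in 𝓝[Icc a b] t, ‖g (γ s) - g (γ t) - φ (γ s - γ t)‖ ≤ δ' * ‖γ s - γ t‖ :=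
      htendγ.eventually hlittle
    have hIocsub : Ioc t b' ⊆ Icc a b :=
      fun s hs => ⟨le_trans htIcc.1 hs.1.le, le_trans hs.2 hb'Icc.2⟩
    have hnbT : (𝓝[Ioc t b'] t).NeBot := by
      apply mem_closure_iff_nhdsWithin_neBot.mp
      rw [closure_Ioc ht.2.ne]
      exact ⟨le_refl t, ht.2.le⟩
    have hev' : ∀ᶠ s in 𝓝[Ioc t b'] t,
        ‖g (γ s) - g (γ t) - φ (γ s - γ t)‖ ≤ δ' * ‖γ s - γ t‖ :=
      hev.filter_mono (nhdsWithin_mono t hIocsub)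
    obtain ⟨s, hsb, hsm⟩ := (hev'.and self_mem_nhdsWithin).exists
    refine ⟨s, hsm.1, hsm.2, ?_⟩
    have hsIcc : s ∈ Icc a b := hIocsub hsm
    have hd := hsub t htIcc s hsIcc hsm.1.le
    have hdist : ‖γ s - γ t‖ ≤ v s - v t := by
      rw [← dist_eq_norm]; exact hd.1
    have hφb : ‖φ (γ s - γ t)‖ ≤ ε * ‖γ s - γ t‖ :=
      le_trans (φ.le_opNorm _) (mul_le_mul_of_nonneg_right hφn (norm_nonneg _))
    have htri : |H s - H t| ≤ ‖g (γ s) - g (γ t) - φ (γ s - γ t)‖ + ‖φ (γ s - γ t)‖ := by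
      have := norm_sub_norm_le (g (γ s) - g (γ t) - φ (γ s - γ t)) (-(φ (γ s - γ t)))
      simp only [hHdef, Real.norm_eq_abs] at *
      calc |g (γ s) - g (γ t)| = |(g (γ s) - g (γ t) - φ (γ s - γ t)) + φ (γ s - γ t)| := by
            ring_nf
        _ ≤ _ := abs_add_le _ _
    have hnn : (0:ℝ) ≤ ‖γ s - γ t‖ := norm_nonneg _
    have : |H s - H t| ≤ (ε + δ') * ‖γ s - γ t‖ := by
      calc |H s - H t| ≤ ‖g (γ s) - g (γ t) - φ (γ s - γ t)‖ + ‖φ (γ s - γ t)‖ := htri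
        _ ≤ δ' * ‖γ s - γ t‖ + ε * ‖γ s - γ t‖ := add_le_add hsb hφb
        _ = (ε + δ') * ‖γ s - γ t‖ := by ring
    calc |H s - H t| ≤ (ε + δ') * ‖γ s - γ t‖ := this
      _ ≤ (ε + δ') * (v s - v t) := by
          apply mul_le_mul_of_nonneg_left hdist (by positivity)
      _ ≤ (ε + δ') * (v s - v t) + δc * (s - t) := by
          nlinarith [hδcpos.le, sub_nonneg.mpr hsm.1.le]
  -- assemble
  have hva : v b' - v a' ≤ L := (hsub a' ha'Icc b' hb'Icc hb'.1.le).2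
  have hva0 : 0 ≤ v b' - v a' :=
    sub_nonneg.mpr (hmono ha'Icc hb'Icc hb'.1.le)
  have hδ'L : δ' * L ≤ η / 4 := by
    rw [hδ'def]
    rw [div_mul_eq_mul_div, div_le_div_iff₀ (by positivity) (by norm_num)]
    nlinarith
  have hδcb : δc * (b' - a') ≤ η / 4 := by
    have h1 : b' - a' ≤ b - a := by
      have := ha'Icc.1; have := hb'Icc.2; linarith
    have h2 : δc * (b' - a') ≤ δc * (b - a) :=
      mul_le_mul_of_nonneg_left h1 hδcpos.le
    have hba : b - a ≠ 0 := by linarith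
    have h3 : δc * (b - a) = η / 4 := by
      rw [hδcdef]; field_simp
    linarith
  have hmid : |H b' - H a'| ≤ ε * L + η / 4 + η / 4 := by
    have h1 : (ε + δ') * (v b' - v a') ≤ ε * L + δ' * L := by
      nlinarith
    linarith [hcore]
  have hA : |H a' - H a| < η / 4 := by
    have := Metric.mem_ball.mp ha'd; rwa [Real.dist_eq] at this
  have hB : |H b' - H b| < η / 4 := by
    have := Metric.mem_ball.mp hb'd; rwa [Real.dist_eq] at this
  calc |g (γ b) - g (γ a)| = |H b - H a| := rfl
    _ ≤ |H b - H b'| + |H b' - H a| := abs_sub_le _ _ _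
    _ ≤ |H b - H b'| + (|H b' - H a'| + |H a' - H a|) :=
        add_le_add le_rfl (abs_sub_le _ _ _)
    _ ≤ η/4 + ((ε * L + η / 4 + η / 4) + η/4) := by
        refine add_le_add ?_ (add_le_add hmid hA.le)
        rw [abs_sub_comm]; exact hB.le
    _ = ε * L + η := by ring

/-- If `K` is a topologically regular compact set such that every `x ∈ ∂K` has a
constant `C_x > 0` and a neighbourhood `V_x` with: each `y ∈ V_x ∩ K` is joined to `x`
by a rectifiable path of length at most `C_x ‖x - y‖` contained in `int(K) ∪ {x, y}`,
then `C¹_int(K) = C¹(K)`: the continuous extension of the interior derivative of any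
`f ∈ C¹_int(K)` is a continuous derivative of `f` on all of `K`. -/
theorem c1int_eq_c1_of_boundary_paths {d : ℕ}
    (K : Set (EuclideanSpace ℝ (Fin d))) (hK : IsCompact K)
    (hreg : K = closure (interior K))
    (hpath : ∀ x ∈ frontier K, ∃ C > (0:ℝ), ∃ V ∈ 𝓝 x, ∀ y ∈ V ∩ K,
      ∃ γ : ℝ → EuclideanSpace ℝ (Fin d), ContinuousOn γ (Icc 0 1) ∧
        γ 0 = x ∧ γ 1 = y ∧ (∀ t ∈ Icc (0:ℝ) 1, γ t ∈ interior K ∪ {x, y}) ∧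
        eVariationOn γ (Icc 0 1) ≤ ENNReal.ofReal (C * ‖x - y‖)) :
    ∀ (f : EuclideanSpace ℝ (Fin d) → ℝ)
      (df : EuclideanSpace ℝ (Fin d) → EuclideanSpace ℝ (Fin d)),
      ContinuousOn f K → ContinuousOn df K →
      (∀ x ∈ interior K, HasGradientAt f (df x) x) →
      IsDerivOn K f df := by
  intro f df hf hdf hdiff x hx
  by_cases hxi : x ∈ interior K
  · -- interior point: direct from differentiability
    have hF : HasFDerivAt f (InnerProductSpace.toDual ℝ _ (df x)) x :=
      (hdiff x hxi).hasFDerivAt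
    have htend := hasFDerivAt_iff_tendsto.mp hF
    refine squeeze_zero_norm (fun y => ?_) (htend.mono_left nhdsWithin_le_nhds)
    have h1 : (InnerProductSpace.toDual ℝ (EuclideanSpace ℝ (Fin d)) (df x)) (y - x)
        = (inner ℝ (df x) (y - x) : ℝ) := InnerProductSpace.toDual_apply_apply
    rw [h1, Real.norm_eq_abs, Real.norm_eq_abs, abs_div, abs_norm, div_eq_inv_mul]
  · -- boundary point
    have hxK : x ∈ K := hx
    have hKc : IsClosed K := hK.isClosed
    have hxf : x ∈ frontier K := by
      rw [frontier, hKc.closure_eq]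
      exact ⟨hxK, hxi⟩
    obtain ⟨C, hC, V, hV, hpath'⟩ := hpath x hxf
    rw [Metric.tendsto_nhdsWithin_nhds]
    intro ε₀ hε₀
    set ε : ℝ := ε₀ / (C + 1) with hεdef
    have hεpos : 0 < ε := div_pos hε₀ (by linarith)
    have hdfx : ContinuousWithinAt df K x := hdf x hxK
    rw [Metric.continuousWithinAt_iff] at hdfx
    obtain ⟨r, hr, hrprop⟩ := hdfx ε hεpos
    obtain ⟨r₂, hr₂, hr₂V⟩ := Metric.mem_nhds_iff.mp hV
    refine ⟨min r₂ (r / (C + 1)), by positivity, ?_⟩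
    intro y hy hyd
    have hyK : y ∈ K := hy.1
    have hyx : y ≠ x := hy.2
    have hyV : y ∈ V := hr₂V (Metric.mem_ball.mpr (lt_of_lt_of_le hyd (min_le_left _ _)))
    obtain ⟨γ, hγc, hγ0, hγ1, hγmem, hγvar⟩ := hpath' y ⟨hyV, hyK⟩
    set L : ℝ := C * ‖x - y‖ with hLdef
    have hxynorm : ‖x - y‖ = dist y x := by rw [norm_sub_rev, ← dist_eq_norm]
    have hxypos : 0 < ‖x - y‖ := by
      rw [hxynorm]; exact dist_pos.mpr hyx
    have hL0 : 0 ≤ L := by positivity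
    have hLr : L < r := by
      have h1 : dist y x < r / (C + 1) := lt_of_lt_of_le hyd (min_le_right _ _)
      have hq : (0:ℝ) < r / (C + 1) := by positivity
      have hqe : r / (C + 1) * (C + 1) = r := div_mul_cancel₀ r (by linarith)
      have h2 : C * dist y x < C * (r / (C + 1)) := by
        exact mul_lt_mul_of_pos_left h1 hC
      rw [hLdef, hxynorm]
      nlinarith
    have hball : ∀ t ∈ Icc (0:ℝ) 1, dist (γ t) x ≤ L := by
      intro t ht
      have h2 : edist (γ t) (γ 0) ≤ eVariationOn γ (Icc 0 1) :=
        eVariationOn.edist_le γ ht (left_mem_Icc.mpr zero_le_one)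
      rw [hγ0] at h2
      exact (edist_le_ofReal hL0).mp (le_trans h2 hγvar)
    set Z : Set ℝ := Icc 0 1 ∩ γ ⁻¹' {x} with hZdef
    have hZcl : IsClosed Z := hγc.preimage_isClosed_of_isClosed isClosed_Icc isClosed_singleton
    have hZne : Z.Nonempty := ⟨0, ⟨⟨le_refl 0, zero_le_one⟩, by simp [hγ0]⟩⟩
    have hZbdd : BddAbove Z := ⟨1, fun t ht => ht.1.2⟩
    set t₀ := sSup Z with ht₀def
    have ht₀Z : t₀ ∈ Z := hZcl.csSup_mem hZne hZbdd
    have ht₀Icc : t₀ ∈ Icc (0:ℝ) 1 := ht₀Z.1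
    have hγt₀ : γ t₀ = x := ht₀Z.2
    set W : Set ℝ := Icc t₀ 1 ∩ γ ⁻¹' {y} with hWdef
    have hWcl : IsClosed W :=
      (hγc.mono (Icc_subset_Icc ht₀Icc.1 (le_refl 1))).preimage_isClosed_of_isClosed
        isClosed_Icc isClosed_singleton
    have hWne : W.Nonempty := ⟨1, ⟨⟨ht₀Icc.2, le_refl 1⟩, by simp [hγ1]⟩⟩
    have hWbdd : BddBelow W := ⟨t₀, fun t ht => ht.1.1⟩
    set t₁ := sInf W with ht₁def
    have ht₁W : t₁ ∈ W := hWcl.csInf_mem hWne hWbdd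
    have hγt₁ : γ t₁ = y := ht₁W.2
    have ht₀t₁ : t₀ ≤ t₁ := ht₁W.1.1
    have ht₁1 : t₁ ≤ 1 := ht₁W.1.2
    have hIccsub : Icc t₀ t₁ ⊆ Icc (0:ℝ) 1 := Icc_subset_Icc ht₀Icc.1 ht₁1
    set U : Set (EuclideanSpace ℝ (Fin d)) := interior K ∩ Metric.ball x r with hUdef
    have hintU : ∀ t ∈ Ioo t₀ t₁, γ t ∈ U := by
      intro t ht
      have htIcc : t ∈ Icc (0:ℝ) 1 := hIccsub (Ioo_subset_Icc_self ht)
      have hγx : γ t ≠ x := by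
        intro h
        have hmemZ : t ∈ Z := ⟨htIcc, by simp [h]⟩
        exact absurd (le_csSup hZbdd hmemZ) (not_le.mpr ht.1)
      have hγy : γ t ≠ y := by
        intro h
        have hmemW : t ∈ W := ⟨⟨ht.1.le, htIcc.2⟩, by simp [h]⟩
        exact absurd (csInf_le hWbdd hmemW) (not_le.mpr ht.2)
      have hγint : γ t ∈ interior K := by
        rcases hγmem t htIcc with h | h
        · exact h
        · simp only [mem_insert_iff, mem_singleton_iff] at h
          rcases h with h | h
          · exact absurd h hγx
          · exact absurd h hγy
      exact ⟨hγint, Metric.mem_ball.mpr (lt_of_le_of_lt (hball t htIcc) hLr)⟩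
    set g : EuclideanSpace ℝ (Fin d) → ℝ := fun w => f w - (inner ℝ (df x) w : ℝ) with hgdef
    have hU : ∀ z ∈ U, ∃ φ : EuclideanSpace ℝ (Fin d) →L[ℝ] ℝ,
        HasFDerivAt g φ z ∧ ‖φ‖ ≤ ε := by
      intro z hz
      have hzint : z ∈ interior K := hz.1
      have hzK : z ∈ K := interior_subset hzint
      have hzb : dist z x < r := Metric.mem_ball.mp hz.2
      refine ⟨(InnerProductSpace.toDual ℝ _ (df z) : EuclideanSpace ℝ (Fin d) →L[ℝ] ℝ)
        - InnerProductSpace.toDual ℝ _ (df x), ?_, ?_⟩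
      · have h1 : HasFDerivAt f (InnerProductSpace.toDual ℝ _ (df z)) z :=
          (hdiff z hzint).hasFDerivAt
        have h2 : HasFDerivAt (fun w => (inner ℝ (df x) w : ℝ))
            ((InnerProductSpace.toDual ℝ _ (df x) : EuclideanSpace ℝ (Fin d) →L[ℝ] ℝ)) z :=
          (InnerProductSpace.toDual ℝ _ (df x) : EuclideanSpace ℝ (Fin d) →L[ℝ] ℝ).hasFDerivAt
        exact h1.sub h2
      · have heq : (InnerProductSpace.toDual ℝ _ (df z) : EuclideanSpace ℝ (Fin d) →L[ℝ] ℝ)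
            - InnerProductSpace.toDual ℝ _ (df x)
            = InnerProductSpace.toDual ℝ _ (df z - df x) := by rw [map_sub]
        rw [heq]
        have heq2 : ‖(InnerProductSpace.toDual ℝ _ (df z - df x)
            : EuclideanSpace ℝ (Fin d) →L[ℝ] ℝ)‖ = ‖df z - df x‖ :=
          (InnerProductSpace.toDual ℝ _).norm_map (df z - df x)
        rw [heq2, ← dist_eq_norm]
        exact (hrprop hzK hzb).le
    have hγc' : ContinuousOn γ (Icc t₀ t₁) := hγc.mono hIccsub
    have hmapsK : ∀ t ∈ Icc t₀ t₁, γ t ∈ K := by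
      intro t ht
      rcases hγmem t (hIccsub ht) with h | h
      · exact interior_subset h
      · simp only [mem_insert_iff, mem_singleton_iff] at h
        rcases h with h | h
        · rw [h]; exact hxK
        · rw [h]; exact hyK
    have hhcont : ContinuousOn (fun t => g (γ t)) (Icc t₀ t₁) := by
      simp only [hgdef]
      apply ContinuousOn.sub
      · exact hf.comp hγc' hmapsK
      · exact (InnerProductSpace.toDual ℝ _ (df x)
          : EuclideanSpace ℝ (Fin d) →L[ℝ] ℝ).continuous.comp_continuousOn hγc'
    have hLvar : eVariationOn γ (Icc t₀ t₁) ≤ ENNReal.ofReal L :=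
      le_trans (eVariationOn.mono γ hIccsub) hγvar
    have hkey := path_est hεpos.le hU ht₀t₁ hγc' hintU hhcont hL0 hLvar
    rw [hγt₀, hγt₁] at hkey
    have hnum : g y - g x = f y - f x - (inner ℝ (df x) (y - x) : ℝ) := by
      simp only [hgdef]
      rw [inner_sub_right]
      ring
    rw [hnum] at hkey
    have hrw : dist ((f y - f x - (inner ℝ (df x) (y - x) : ℝ)) / ‖y - x‖) 0
        = |f y - f x - (inner ℝ (df x) (y - x) : ℝ)| / ‖y - x‖ := by
      rw [dist_zero_right, Real.norm_eq_abs, abs_div, abs_norm]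
    rw [hrw]
    have hyx' : ‖y - x‖ = ‖x - y‖ := norm_sub_rev _ _
    rw [div_lt_iff₀ (by rw [hyx']; exact hxypos)]
    have hεe : ε * (C + 1) = ε₀ := div_mul_cancel₀ ε₀ (by linarith)
    calc |f y - f x - (inner ℝ (df x) (y - x) : ℝ)| ≤ ε * L := hkey
      _ = ε * C * ‖x - y‖ := by rw [hLdef]; ring
      _ < ε₀ * ‖y - x‖ := by
          rw [hyx']
          apply mul_lt_mul_of_pos_right ?_ hxypos
          nlinarith
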